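/- Consider a finite MDP with discount γ ∈ [0,1), reward vector r, behavior policy μ with invariant distribution d_μ(s,a) > 0 everywhere, and target policy π. Define the expected off-policy expected-SARSA operator F̄(q) = (I - D_μ(I - γP_π))q + D_μ r. Then there exist p ≥ 1 and κ ∈ (0,1) such that F̄ is a κ-contraction with respect to the ℓ_p norm, and its unique fixed point is the action-value function q_π of the target policy, i.e. q_π = (I - γP_π)^{-1} r. -/
import Mathlib


/-- The expected off-policy expected-SARSA operator
F̄(q) = (I - D_μ(I - γP_π)) q + D_μ r is an ℓ_p-contraction for some p ≥ 1 and
κ ∈ (0,1), and its unique fixed point is the target-policy action-value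
function, i.e. the solution of (I - γP_π) q = r. -/
theorem stmt_5 {S A : Type*} [Fintype S] [Fintype A] [DecidableEq S] [DecidableEq A]
    [Nonempty S] [Nonempty A]
    (γ : ℝ) (hγ : γ ∈ Set.Ico (0 : ℝ) 1)
    (r : S × A → ℝ)
    (pk : S → A → S → ℝ)
    (hpk : ∀ s a, (∀ s', 0 ≤ pk s a s') ∧ ∑ s', pk s a s' = 1)
    (π : S → A → ℝ)
    (hπ : ∀ s, (∀ a, 0 ≤ π s a) ∧ ∑ a, π s a = 1)
    (dμ : S × A → ℝ) (hdpos : ∀ sa, 0 < dμ sa) (hdsum : ∑ sa, dμ sa = 1) :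
    let Pπ : Matrix (S × A) (S × A) ℝ := fun sa sa' => pk sa.1 sa.2 sa'.1 * π sa'.1 sa'.2
    let Fbar : ((S × A) → ℝ) → ((S × A) → ℝ) := fun q =>
      Matrix.mulVec (1 - Matrix.diagonal dμ * (1 - γ • Pπ)) q +
        Matrix.mulVec (Matrix.diagonal dμ) r
    ∃ p ≥ (1 : ℝ), ∃ κ ∈ Set.Ioo (0 : ℝ) 1,
      (∀ q q' : (S × A) → ℝ,
        (∑ sa, |Fbar q sa - Fbar q' sa| ^ p) ^ (1 / p) ≤
          κ * (∑ sa, |q sa - q' sa| ^ p) ^ (1 / p)) ∧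
      (∃! q : (S × A) → ℝ, Fbar q = q) ∧
      (∀ q : (S × A) → ℝ, Fbar q = q → Matrix.mulVec (1 - γ • Pπ) q = r) := by
  intro Pπ Fbar
  classical
  obtain ⟨hγ0, hγ1⟩ := hγ
  have hne : (Finset.univ : Finset (S × A)).Nonempty := Finset.univ_nonempty
  -- basic facts about Pπ
  have hPnn : ∀ x y : S × A, 0 ≤ Pπ x y := fun x y =>
    mul_nonneg ((hpk x.1 x.2).1 y.1) ((hπ y.1).1 y.2)
  have hProw : ∀ x : S × A, ∑ y, Pπ x y = 1 := by
    intro x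
    show (∑ y : S × A, pk x.1 x.2 y.1 * π y.1 y.2) = 1
    rw [Fintype.sum_prod_type]
    simp only [← Finset.mul_sum, (fun s => (hπ s).2)]
    simpa using (hpk x.1 x.2).2
  -- facts about dμ
  have hdle1 : ∀ x : S × A, dμ x ≤ 1 := by
    intro x
    calc dμ x ≤ ∑ sa, dμ sa :=
          Finset.single_le_sum (fun i _ => (hdpos i).le) (Finset.mem_univ x)
      _ = 1 := hdsum
  set dmin : ℝ := Finset.univ.inf' hne dμ with hdmin
  have hdminpos : 0 < dmin := (Finset.lt_inf'_iff hne).2 fun i _ => hdpos i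
  have hdminle : ∀ x, dmin ≤ dμ x := fun x => Finset.inf'_le _ (Finset.mem_univ x)
  have hdmin1 : dmin ≤ 1 := le_trans (hdminle (Classical.arbitrary _)) (hdle1 _)
  -- the contraction factor in sup norm
  set ρ : ℝ := 1 - (1 - γ) * dmin with hρ
  have hρ0 : 0 ≤ ρ := by
    have : (1 - γ) * dmin ≤ 1 * 1 :=
      mul_le_mul (by linarith) hdmin1 hdminpos.le zero_le_one
    simp only [hρ]; linarith
  have hρ1 : ρ < 1 := by
    have : 0 < (1 - γ) * dmin := mul_pos (by linarith) hdminpos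
    simp only [hρ]; linarith
  set ρ' : ℝ := max ρ (1/2) with hρ'
  have hρ'pos : 0 < ρ' := lt_of_lt_of_le (by norm_num) (le_max_right _ _)
  have hρ'1 : ρ' < 1 := max_lt hρ1 (by norm_num)
  have hρρ' : ρ ≤ ρ' := le_max_left _ _
  -- choose p
  set n : ℕ := Fintype.card (S × A) with hn
  have hnpos : 0 < n := Fintype.card_pos
  have hn1 : (1 : ℝ) ≤ (n : ℝ) := by exact_mod_cast hnpos
  have hlogρ' : Real.log ρ' < 0 := Real.log_neg hρ'pos hρ'1
  set p : ℝ := max 1 (Real.log n / (-Real.log ρ') + 1) with hp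
  have hp1 : (1 : ℝ) ≤ p := le_max_left _ _
  have hppos : 0 < p := lt_of_lt_of_le zero_lt_one hp1
  have hlogn : 0 ≤ Real.log n := Real.log_nonneg hn1
  have hpgt : Real.log n / (-Real.log ρ') < p :=
    lt_of_lt_of_le (lt_add_one _) (le_max_right _ _)
  have hLpos : 0 < -Real.log ρ' := by linarith
  have hkey : (n : ℝ) ^ (1/p) * ρ' < 1 := by
    have h1 : Real.log n < p * (-Real.log ρ') := by
      have := (div_lt_iff₀ hLpos).mp hpgt
      linarith [this]
    have h2 : (1/p) * Real.log n < -Real.log ρ' := by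
      rw [one_div, inv_mul_lt_iff₀ hppos]
      linarith [h1]
    have hpow : Real.log ((n : ℝ) ^ (1/p) * ρ') < 0 := by
      rw [Real.log_mul (by positivity) (ne_of_gt hρ'pos),
        Real.log_rpow (by exact_mod_cast hnpos)]
      linarith
    have hprod : 0 < (n : ℝ) ^ (1/p) * ρ' := by positivity
    exact (Real.log_neg_iff hprod).mp hpow
  set κ : ℝ := (n : ℝ) ^ (1/p) * ρ' with hκ
  have hκpos : 0 < κ := by positivity
  -- the iteration matrix
  set Amat : Matrix (S × A) (S × A) ℝ := 1 - Matrix.diagonal dμ * (1 - γ • Pπ) with hAmat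
  have hAentry : ∀ x y, Amat x y =
      (if x = y then (1:ℝ) else 0) * (1 - dμ x) + γ * dμ x * Pπ x y := by
    intro x y
    simp only [hAmat, Matrix.sub_apply, Matrix.diagonal_mul, Matrix.one_apply,
      Matrix.smul_apply, smul_eq_mul]
    ring
  have hAnn : ∀ x y, 0 ≤ Amat x y := by
    intro x y
    rw [hAentry]
    have h1 : 0 ≤ (if x = y then (1:ℝ) else 0) := by positivity
    have h2 : 0 ≤ 1 - dμ x := by linarith [hdle1 x]
    have := hPnn x y
    have := (hdpos x).le
    positivity
  have hArow : ∀ x, ∑ y, Amat x y ≤ ρ := by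
    intro x
    have : ∑ y, Amat x y = 1 - (1 - γ) * dμ x := by
      simp only [hAentry]
      rw [Finset.sum_add_distrib]
      have h1 : ∑ y : S × A, (if x = y then (1:ℝ) else 0) * (1 - dμ x) = 1 - dμ x := by
        simp
      have h2 : ∑ y : S × A, γ * dμ x * Pπ x y = γ * dμ x := by
        rw [← Finset.mul_sum, hProw x, mul_one]
      rw [h1, h2]; ring
    rw [this, hρ]
    have : (1 - γ) * dmin ≤ (1 - γ) * dμ x :=
      mul_le_mul_of_nonneg_left (hdminle x) (by linarith)
    linarith
  -- sup-norm bound for the iteration matrix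
  have hsupbound : ∀ (v : (S × A) → ℝ) (x : S × A),
      |Amat.mulVec v x| ≤ ρ' * Finset.univ.sup' hne (fun y => |v y|) := by
    intro v x
    set M : ℝ := Finset.univ.sup' hne (fun y => |v y|) with hM
    have hMnn : 0 ≤ M :=
      le_trans (abs_nonneg (v (Classical.arbitrary (S × A))))
        (Finset.le_sup' (fun y => |v y|) (Finset.mem_univ (Classical.arbitrary (S × A))))
    calc |Amat.mulVec v x| = |∑ y, Amat x y * v y| := rfl
      _ ≤ ∑ y, |Amat x y * v y| := Finset.abs_sum_le_sum_abs _ _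
      _ = ∑ y, Amat x y * |v y| := by
          refine Finset.sum_congr rfl fun y _ => ?_
          rw [abs_mul, abs_of_nonneg (hAnn x y)]
      _ ≤ ∑ y, Amat x y * M := by
          refine Finset.sum_le_sum fun y _ => ?_
          exact mul_le_mul_of_nonneg_left
            (Finset.le_sup' (fun y => |v y|) (Finset.mem_univ y)) (hAnn x y)
      _ = (∑ y, Amat x y) * M := by rw [Finset.sum_mul]
      _ ≤ ρ * M := mul_le_mul_of_nonneg_right (hArow x) hMnn
      _ ≤ ρ' * M := mul_le_mul_of_nonneg_right hρρ' hMnn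
  -- sup ≤ p-norm
  have hsup_le_pnorm : ∀ v : (S × A) → ℝ,
      Finset.univ.sup' hne (fun y => |v y|) ≤ (∑ sa, |v sa| ^ p) ^ (1/p) := by
    intro v
    obtain ⟨y0, _, hy0⟩ := Finset.exists_mem_eq_sup' hne (fun y => |v y|)
    rw [hy0]
    have h1 : |v y0| ^ p ≤ ∑ sa, |v sa| ^ p :=
      Finset.single_le_sum (fun i _ => Real.rpow_nonneg (abs_nonneg _) p)
        (Finset.mem_univ y0)
    calc |v y0| = (|v y0| ^ p) ^ (1/p) := by
          rw [← Real.rpow_mul (abs_nonneg _), mul_one_div_cancel (ne_of_gt hppos),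
            Real.rpow_one]
      _ ≤ (∑ sa, |v sa| ^ p) ^ (1/p) :=
          Real.rpow_le_rpow (Real.rpow_nonneg (abs_nonneg _) p) h1 (by positivity)
  -- the main contraction estimate
  have hcontract : ∀ q q' : (S × A) → ℝ,
      (∑ sa, |Fbar q sa - Fbar q' sa| ^ p) ^ (1 / p) ≤
        κ * (∑ sa, |q sa - q' sa| ^ p) ^ (1 / p) := by
    intro q q'
    set v : (S × A) → ℝ := q - q' with hv
    have hdiff : ∀ sa, Fbar q sa - Fbar q' sa = Amat.mulVec v sa := by
      intro sa
      show (Amat.mulVec q sa + _) - (Amat.mulVec q' sa + _) = _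
      rw [hv, Matrix.mulVec_sub]
      simp [Pi.sub_apply]
    set M : ℝ := Finset.univ.sup' hne (fun y => |v y|) with hM
    have hMnn : 0 ≤ M :=
      le_trans (abs_nonneg (v (Classical.arbitrary (S × A))))
        (Finset.le_sup' (fun y => |v y|) (Finset.mem_univ (Classical.arbitrary (S × A))))
    have hstep1 : ∑ sa, |Fbar q sa - Fbar q' sa| ^ p ≤ (n : ℝ) * (ρ' * M) ^ p := by
      calc ∑ sa, |Fbar q sa - Fbar q' sa| ^ p
          ≤ ∑ _sa : S × A, (ρ' * M) ^ p := by
            refine Finset.sum_le_sum fun sa _ => ?_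
            rw [hdiff sa]
            exact Real.rpow_le_rpow (abs_nonneg _) (hsupbound v sa) (by positivity)
        _ = (n : ℝ) * (ρ' * M) ^ p := by
            rw [Finset.sum_const, Finset.card_univ, nsmul_eq_mul, hn]
    have hρ'M : 0 ≤ ρ' * M := mul_nonneg hρ'pos.le hMnn
    calc (∑ sa, |Fbar q sa - Fbar q' sa| ^ p) ^ (1 / p)
        ≤ ((n : ℝ) * (ρ' * M) ^ p) ^ (1/p) := by
          refine Real.rpow_le_rpow ?_ hstep1 (by positivity)
          exact Finset.sum_nonneg fun i _ => Real.rpow_nonneg (abs_nonneg _) p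
      _ = (n : ℝ) ^ (1/p) * (ρ' * M) := by
          rw [Real.mul_rpow (by positivity) (Real.rpow_nonneg hρ'M p),
            ← Real.rpow_mul hρ'M, mul_one_div_cancel (ne_of_gt hppos), Real.rpow_one]
      _ = κ * M := by rw [hκ]; ring
      _ ≤ κ * (∑ sa, |v sa| ^ p) ^ (1/p) :=
          mul_le_mul_of_nonneg_left (hsup_le_pnorm v) hκpos.le
      _ = κ * (∑ sa, |q sa - q' sa| ^ p) ^ (1/p) := rfl
  -- existence of a fixed point
  have hBinj : Function.Injective ((1 - γ • Pπ : Matrix (S × A) (S × A) ℝ)).mulVecLin := by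
    rw [← LinearMap.ker_eq_bot, LinearMap.ker_eq_bot']
    intro q hq
    have hq' : (1 - γ • Pπ : Matrix (S × A) (S × A) ℝ).mulVec q = 0 := hq
    rw [Matrix.sub_mulVec, Matrix.one_mulVec, Matrix.smul_mulVec, sub_eq_zero] at hq'
    set M : ℝ := Finset.univ.sup' hne (fun y => |q y|) with hM
    have hMnn : 0 ≤ M :=
      le_trans (abs_nonneg (q (Classical.arbitrary (S × A))))
        (Finset.le_sup' (fun y => |q y|) (Finset.mem_univ (Classical.arbitrary (S × A))))
    have hb : ∀ x, |q x| ≤ γ * M := by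
      intro x
      have hx : q x = γ * Pπ.mulVec q x := by
        have h := congrFun hq' x
        simpa [Pi.smul_apply, smul_eq_mul] using h
      rw [hx, abs_mul, abs_of_nonneg hγ0]
      refine mul_le_mul_of_nonneg_left ?_ hγ0
      calc |Pπ.mulVec q x| = |∑ y, Pπ x y * q y| := rfl
        _ ≤ ∑ y, |Pπ x y * q y| := Finset.abs_sum_le_sum_abs _ _
        _ = ∑ y, Pπ x y * |q y| := by
            refine Finset.sum_congr rfl fun y _ => ?_
            rw [abs_mul, abs_of_nonneg (hPnn x y)]
        _ ≤ ∑ y, Pπ x y * M := by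
            refine Finset.sum_le_sum fun y _ => ?_
            exact mul_le_mul_of_nonneg_left
              (Finset.le_sup' (fun y => |q y|) (Finset.mem_univ y)) (hPnn x y)
        _ = (∑ y, Pπ x y) * M := by rw [Finset.sum_mul]
        _ = M := by rw [hProw x, one_mul]
    have hMle : M ≤ γ * M := by
      obtain ⟨y0, _, hy0⟩ := Finset.exists_mem_eq_sup' hne (fun y => |q y|)
      exact le_trans (le_of_eq (hM.trans hy0)) (hb y0)
    have hM0 : M ≤ 0 := by nlinarith
    funext x
    have : |q x| ≤ M := Finset.le_sup' (fun y => |q y|) (Finset.mem_univ x)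
    have : |q x| = 0 := le_antisymm (le_trans this hM0) (abs_nonneg _)
    simpa using abs_eq_zero.mp this
  have hBsurj : Function.Surjective ((1 - γ • Pπ : Matrix (S × A) (S × A) ℝ)).mulVecLin :=
    LinearMap.injective_iff_surjective.mp hBinj
  obtain ⟨q₀, hq₀⟩ := hBsurj r
  have hq₀' : (1 - γ • Pπ : Matrix (S × A) (S × A) ℝ).mulVec q₀ = r := hq₀
  have hfix : Fbar q₀ = q₀ := by
    show Amat.mulVec q₀ + (Matrix.diagonal dμ).mulVec r = q₀
    rw [hAmat, Matrix.sub_mulVec, Matrix.one_mulVec, ← Matrix.mulVec_mulVec, hq₀']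
    ring
  -- any fixed point solves the Bellman equation
  have hbellman : ∀ q : (S × A) → ℝ, Fbar q = q →
      Matrix.mulVec (1 - γ • Pπ) q = r := by
    intro q hq
    have hq' : Amat.mulVec q + (Matrix.diagonal dμ).mulVec r = q := hq
    rw [hAmat, Matrix.sub_mulVec, Matrix.one_mulVec, ← Matrix.mulVec_mulVec] at hq'
    have h2 : (Matrix.diagonal dμ).mulVec ((1 - γ • Pπ : Matrix (S × A) (S × A) ℝ).mulVec q) =
        (Matrix.diagonal dμ).mulVec r := by
      have := hq'
      funext x
      have hx := congrFun this x
      simp only [Pi.add_apply, Pi.sub_apply] at hx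
      linarith [hx]
    funext x
    have hx := congrFun h2 x
    rw [Matrix.mulVec_diagonal, Matrix.mulVec_diagonal] at hx
    exact mul_left_cancel₀ (ne_of_gt (hdpos x)) hx
  -- uniqueness
  have huniq : ∃! q : (S × A) → ℝ, Fbar q = q := by
    refine ⟨q₀, hfix, fun q hq => ?_⟩
    have h1 := hbellman q hq
    have : ((1 - γ • Pπ : Matrix (S × A) (S × A) ℝ)).mulVecLin q =
        ((1 - γ • Pπ : Matrix (S × A) (S × A) ℝ)).mulVecLin q₀ := by
      show (1 - γ • Pπ : Matrix (S × A) (S × A) ℝ).mulVec q =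
        (1 - γ • Pπ : Matrix (S × A) (S × A) ℝ).mulVec q₀
      rw [h1, hq₀']
    exact hBinj this
  exact ⟨p, hp1, κ, ⟨hκpos, hkey⟩, hcontract, huniq, hbellman⟩
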